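/- Let G be a (second countable) Lie group with left Haar measure dg, and let F be a countable set of continuous complex-valued functions on G. Then there exists a tame measure dμ on G such that for all g₁, g₂ ∈ G and every f ∈ F, the function h ↦ f(g₂⁻¹ h g₁) belongs to L²(G, dμ). -/

import Mathlib

open MeasureTheory Matrix
open scoped ENNReal ComplexConjugate Manifold

namespace HolFourier

variable (E : Type*) [NormedAddCommGroup E] [NormedSpace ℂ E]
variable {G : Type*} [TopologicalSpace G] [ChartedSpace E G] [Group G]
  [LieGroup 𝓘(ℂ, E) (⊤ : ℕ∞) G]

/-- A function on a complex Lie group (modelled on the complex normed space `E`)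
is holomorphic if it is `ℂ`-differentiable in charts. -/
def Holomorphic (f : G → ℂ) : Prop := MDifferentiable 𝓘(ℂ, E) 𝓘(ℂ, ℂ) f

variable [MeasurableSpace G] [BorelSpace G]

/-- A measure on a Lie group is tame if it is a left Haar measure times a density which is
measurable and locally bounded from below. -/
def IsTame (ν : Measure G) : Prop :=
  ∃ dg : Measure G, dg.IsHaarMeasure ∧ ∃ d : G → ℝ≥0∞, Measurable d ∧
    ν = dg.withDensity d ∧
    ∀ x : G, ∃ δ : ℝ≥0∞, 0 < δ ∧ ∃ U ∈ nhds x, ∀ᵐ y ∂dg, y ∈ U → δ ≤ d y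

/-- Matrix element `π_{ij}` of a finite-dimensional (matrix) representation,
with respect to the fixed (orthonormal) basis. -/
def matrixCoeff {n : ℕ} (π : G →* GL (Fin n) ℂ) (i j : Fin n) : G → ℂ :=
  fun g => (π g : Matrix (Fin n) (Fin n) ℂ) i j

/-- A finite-dimensional representation is holomorphic if all its matrix elements are. -/
def IsHolomorphicRep {n : ℕ} (π : G →* GL (Fin n) ℂ) : Prop :=
  ∀ i j : Fin n, Holomorphic E (matrixCoeff π i j)

/-- A submodule invariant under a representation. -/
def IsInvariantSubmodule {n : ℕ} (π : G →* GL (Fin n) ℂ)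
    (p : Submodule ℂ (Fin n → ℂ)) : Prop :=
  ∀ g : G, ∀ v ∈ p, (π g : Matrix (Fin n) (Fin n) ℂ).mulVec v ∈ p

/-- Complete reducibility: every invariant subspace has an invariant complement. -/
def IsCompletelyReducibleRep {n : ℕ} (π : G →* GL (Fin n) ℂ) : Prop :=
  ∀ p : Submodule ℂ (Fin n → ℂ), IsInvariantSubmodule π p →
    ∃ q : Submodule ℂ (Fin n → ℂ), IsInvariantSubmodule π q ∧ IsCompl p q

/-- Irreducibility of a representation. -/
def IsIrreducibleRep {n : ℕ} (π : G →* GL (Fin n) ℂ) : Prop :=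
  0 < n ∧ ∀ p : Submodule ℂ (Fin n → ℂ), IsInvariantSubmodule π p → p = ⊥ ∨ p = ⊤

/-- A complex Lie group is reductive if it admits a faithful finite-dimensional
holomorphic representation and every finite-dimensional holomorphic representation
is completely reducible. -/
def IsReductive (G : Type*) [TopologicalSpace G] [ChartedSpace E G] [Group G]
    [LieGroup 𝓘(ℂ, E) (⊤ : ℕ∞) G] : Prop :=
  (∃ (n : ℕ) (π : G →* GL (Fin n) ℂ), IsHolomorphicRep E π ∧ Function.Injective π) ∧
  ∀ (n : ℕ) (π : G →* GL (Fin n) ℂ), IsHolomorphicRep E π → IsCompletelyReducibleRep π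

/-- A maximal compact subgroup. -/
def IsMaximalCompact (K : Subgroup G) : Prop :=
  IsCompact (K : Set G) ∧
  ∀ K' : Subgroup G, IsCompact (K' : Set G) → K ≤ K' → K' = K

/-- The restriction of `π` to `K` is unitary (with respect to the standard inner
product on `Fin n → ℂ`, i.e. the fixed orthonormal basis). -/
def UnitaryOnK (K : Subgroup G) {n : ℕ} (π : G →* GL (Fin n) ℂ) : Prop :=
  ∀ x ∈ K, (π x : Matrix (Fin n) (Fin n) ℂ) ∈ Matrix.unitaryGroup (Fin n) ℂ

/-- The squared Hilbert–Schmidt norm `‖π(g)‖² = tr (π(g) π(g)*) = Σ_{ij} |π_{ij}(g)|²`. -/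
noncomputable def repNormSq {n : ℕ} (π : G →* GL (Fin n) ℂ) (g : G) : ℝ :=
  ∑ i : Fin n, ∑ j : Fin n, ‖(π g : Matrix (Fin n) (Fin n) ℂ) i j‖ ^ 2

/-- The constant `C_{π,μ} = ∫_G ‖π(g)‖² dμ(g)`. -/
noncomputable def Cconst {n : ℕ} (π : G →* GL (Fin n) ℂ) (μ : Measure G) : ℝ :=
  ∫ g, repNormSq π g ∂μ

/-- `K`-bi-invariance of a measure. -/
def IsKBiInvariant (K : Subgroup G) (μ : Measure G) : Prop :=
  ∀ k ∈ K, Measure.map (fun g => k * g) μ = μ ∧ Measure.map (fun g => g * k) μ = μ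

/-- A `K`-admissible measure: tame, `K`-bi-invariant, and such that all irreducible
holomorphic representations (unitary on `K`) are square-integrable. -/
def IsKAdmissible (K : Subgroup G) (μ : Measure G) : Prop :=
  IsTame μ ∧ IsKBiInvariant K μ ∧
  ∀ (n : ℕ) (π : G →* GL (Fin n) ℂ), IsHolomorphicRep E π → IsIrreducibleRep π →
    UnitaryOnK K π → Integrable (repNormSq π) μ

/-- Membership in `HL²(G, dμ)`: holomorphic and square-integrable. -/
def MemHL2 (f : G → ℂ) (μ : Measure G) : Prop :=
  Holomorphic E f ∧ MemLp f 2 μ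

/-- Bundled finite-dimensional matrix representations of `G`. -/
abbrev RepBundle (G : Type*) [Group G] : Type _ := Σ n : ℕ, G →* GL (Fin n) ℂ

/-- Equivalence of two finite-dimensional representations. -/
def RepEquiv {n m : ℕ} (π : G →* GL (Fin n) ℂ) (π' : G →* GL (Fin m) ℂ) : Prop :=
  ∃ T : (Fin n → ℂ) ≃ₗ[ℂ] (Fin m → ℂ), ∀ (g : G) (v : Fin n → ℂ),
    T ((π g : Matrix (Fin n) (Fin n) ℂ).mulVec v)
      = (π' g : Matrix (Fin m) (Fin m) ℂ).mulVec (T v)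

/-- `R` is a system of representatives of the equivalence classes of the
finite-dimensional irreducible holomorphic representations of `G` (unitary on `K`). -/
def IsRepSystem (K : Subgroup G) (R : Set (RepBundle G)) : Prop :=
  (∀ σ ∈ R, IsHolomorphicRep E σ.2 ∧ IsIrreducibleRep σ.2 ∧ UnitaryOnK K σ.2) ∧
  (∀ σ ∈ R, ∀ τ ∈ R, RepEquiv σ.2 τ.2 → σ = τ) ∧
  ∀ (n : ℕ) (π : G →* GL (Fin n) ℂ), IsHolomorphicRep E π → IsIrreducibleRep π →
    UnitaryOnK K π → ∃ σ ∈ R, RepEquiv π σ.2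

/-- The holomorphic Fourier transform `f̂(π) = C_{π,μ}⁻¹ ∫_G f(g) π(g)* dμ(g)`,
written entrywise: `(π(g)*)_{ij} = conj (π_{ji}(g))`. -/
noncomputable def fourierTransform (f : G → ℂ) {n : ℕ} (π : G →* GL (Fin n) ℂ)
    (μ : Measure G) : Matrix (Fin n) (Fin n) ℂ :=
  Matrix.of fun i j =>
    ((Cconst π μ : ℝ) : ℂ)⁻¹ * ∫ g, f g * (starRingEnd ℂ) (matrixCoeff π j i g) ∂μ

/-- The (unordered) series `Σ_{σ ∈ R} T σ` converges locally uniformly on `G` to `f`: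
for every compact `X ⊆ G` and `ε > 0` there is a finite subset `s₀` of `R` such that all
finite partial sums over finite `s` with `s₀ ⊆ s ⊆ R` are uniformly within `ε` of `f` on `X`. -/
def SumsLocallyUniformlyTo {ι : Type*} (R : Set ι) (T : ι → G → ℂ) (f : G → ℂ) : Prop :=
  ∀ X : Set G, IsCompact X → ∀ ε : ℝ, 0 < ε → ∃ s₀ : Finset ι, ↑s₀ ⊆ R ∧
    ∀ s : Finset ι, s₀ ⊆ s → ↑s ⊆ R → ∀ g ∈ X, ‖(∑ σ ∈ s, T σ g) - f g‖ < ε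


/-- For a (second countable) Lie group `G'` with a countable family `F` of
continuous functions, there is a tame measure `μ` such that all two-sided translates
`h ↦ f (g₂⁻¹ * h * g₁)` of members of `F` are in `L²(G', μ)`. -/
theorem exists_tame_measure_for_countable_family
    {E' : Type*} [NormedAddCommGroup E'] [NormedSpace ℝ E'] [FiniteDimensional ℝ E']
    {G' : Type*} [TopologicalSpace G'] [ChartedSpace E' G'] [Group G']
    [LieGroup 𝓘(ℝ, E') (⊤ : ℕ∞) G'] [SecondCountableTopology G'] [LocallyCompactSpace G']
    [MeasurableSpace G'] [BorelSpace G']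
    (F : Set (G' → ℂ)) (hF : F.Countable) (hFc : ∀ f ∈ F, Continuous f) :
    ∃ μ : Measure G', IsTame μ ∧
      ∀ (g₁ g₂ : G'), ∀ f ∈ F, MemLp (fun h => f (g₂⁻¹ * h * g₁)) 2 μ := by
  classical
  haveI : IsTopologicalGroup G' := topologicalGroup_of_lieGroup 𝓘(ℝ, E') ((⊤ : ℕ∞) : WithTop ℕ∞)
  obtain ⟨e, he⟩ := (hF.insert (0 : G' → ℂ)).exists_eq_range (Set.insert_nonempty _ _)
  have hec : ∀ i, Continuous (e i) := by
    intro i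
    have hi : e i ∈ insert (0 : G' → ℂ) F := he ▸ Set.mem_range_self i
    rcases Set.mem_insert_iff.1 hi with h | h
    · rw [h]; exact continuous_const
    · exact hFc _ h
  set K := CompactExhaustion.choice G' with hKdef
  set dg : Measure G' := Measure.haar with hdg
  -- bounds
  have hB : ∀ n : ℕ, ∃ B : ℝ, ∀ g₁ ∈ K n, ∀ g₂ ∈ K n, ∀ h ∈ K n, ∀ i ≤ n,
      ‖e i (g₂⁻¹ * h * g₁)‖ ^ 2 ≤ B := by
    intro n
    have hcomp : IsCompact ((K n) ×ˢ ((K n) ×ˢ (K n))) :=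
      (K.isCompact n).prod ((K.isCompact n).prod (K.isCompact n))
    have hcont : Continuous (fun p : G' × G' × G' =>
        ∑ i ∈ Finset.range (n+1), ‖e i (p.2.1⁻¹ * p.2.2 * p.1)‖ ^ 2) := by
      refine continuous_finset_sum _ fun i _ => ?_
      have : Continuous fun p : G' × G' × G' => p.2.1⁻¹ * p.2.2 * p.1 := by
        fun_prop
      exact (((hec i).comp this).norm).pow 2
    obtain ⟨B, hBB⟩ := hcomp.exists_bound_of_continuousOn hcont.continuousOn
    refine ⟨B, fun g₁ h1 g₂ h2 h h3 i hi => ?_⟩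
    have h4 := hBB (g₁, g₂, h) ⟨h1, h2, h3⟩
    rw [Real.norm_eq_abs] at h4
    refine le_trans ?_ (le_trans (le_abs_self _) h4)
    exact Finset.single_le_sum (f := fun i => ‖e i (g₂⁻¹ * h * g₁)‖ ^ 2)
      (fun j _ => by positivity) (Finset.mem_range.2 (Nat.lt_succ_of_le hi))
  choose M hM using hB
  -- density coefficients
  set c : ℕ → ℝ≥0∞ := fun n =>
    ((2:ℝ≥0∞)^n * (1 + ENNReal.ofReal (M n)) * (1 + dg (K n)))⁻¹ with hcdef
  have hKfin : ∀ n, dg (K n) < ⊤ := fun n => (K.isCompact n).measure_lt_top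
  have hc0 : ∀ n, 0 < c n := by
    intro n
    rw [hcdef]
    simp only [ENNReal.inv_pos]
    exact ENNReal.mul_ne_top (ENNReal.mul_ne_top (by simp)
      (by simp [ENNReal.ofReal_ne_top])) (by simp [(hKfin n).ne])
  have hct : ∀ n, c n < ⊤ := by
    intro n
    rw [hcdef]
    refine ENNReal.inv_lt_top.2 ?_
    have h1 : (0:ℝ≥0∞) ≠ 2^n := (ENNReal.pow_pos (by norm_num) n).ne
    have h2 : (0:ℝ≥0∞) ≠ 1 + ENNReal.ofReal (M n) :=
      (lt_of_lt_of_le one_pos le_self_add).ne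
    have h3 : (0:ℝ≥0∞) ≠ 1 + dg (K n) := (lt_of_lt_of_le one_pos le_self_add).ne
    exact pos_iff_ne_zero.2 (by
      simp only [ne_eq, mul_eq_zero, not_or]
      exact ⟨⟨h1.symm, h2.symm⟩, h3.symm⟩)
  -- the index function
  have hWmono : ∀ {m n : ℕ}, m ≤ n → interior (K m) ⊆ interior (K n) :=
    fun h => interior_mono (K.subset h)
  have hWex : ∀ x : G', ∃ n, x ∈ interior (K n) := by
    intro x
    obtain ⟨n, hn⟩ := K.exists_mem x
    exact ⟨n+1, K.subset_interior_succ n hn⟩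
  set nd : G' → ℕ := fun x => Nat.find (hWex x) with hnddef
  have hnd_spec : ∀ x, x ∈ interior (K (nd x)) := fun x => Nat.find_spec (hWex x)
  have hnd_le : ∀ x n, x ∈ interior (K n) → nd x ≤ n := fun x n h => Nat.find_le h
  have hnd_iff : ∀ x n, nd x ≤ n ↔ x ∈ interior (K n) :=
    fun x n => ⟨fun h => hWmono h (hnd_spec x), hnd_le x n⟩
  -- shells
  set S : ℕ → Set G' := fun n => {x | nd x = n} with hSdef
  have hSm : ∀ n, MeasurableSet (S n) := by
    intro n
    have : S n = {x | nd x ≤ n} \ ⋃ m ∈ Finset.range n, {x | nd x ≤ m} := by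
      ext x
      simp only [hSdef, Set.mem_setOf_eq, Set.mem_diff, Set.mem_iUnion, Finset.mem_range,
        not_exists, Set.mem_setOf_eq]
      constructor
      · rintro rfl; exact ⟨le_rfl, fun m hm => by omega⟩
      · rintro ⟨h1, h2⟩
        by_contra hne
        exact h2 (nd x) (by omega) le_rfl
    rw [this]
    have hmeas : ∀ m : ℕ, MeasurableSet {x : G' | nd x ≤ m} := by
      intro m
      have : {x : G' | nd x ≤ m} = interior (K m) := Set.ext fun x => hnd_iff x m
      rw [this]; exact isOpen_interior.measurableSet
    exact (hmeas n).diff (MeasurableSet.biUnion (Finset.range n).countable_toSet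
      (fun m _ => hmeas m))
  have hSdisj : Pairwise (Function.onFun Disjoint S) := by
    intro m n hmn
    refine Set.disjoint_left.2 fun x hxm hxn => hmn ?_
    rw [← hxm, ← hxn]
  have hSunion : ⋃ n, S n = Set.univ :=
    Set.iUnion_eq_univ_iff.2 fun x => ⟨nd x, rfl⟩
  -- the density
  set d : G' → ℝ≥0∞ := fun x => c (nd x) with hddef
  have hnd_meas : Measurable nd := by
    refine measurable_to_countable' fun n => ?_
    have : nd ⁻¹' {n} = S n := rfl
    rw [this]; exact hSm n
  have hd_meas : Measurable d := (measurable_from_top (f := c)).comp hnd_meas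
  set μ : Measure G' := dg.withDensity d with hμdef
  -- tameness
  have htame2 : ∀ x : G', ∃ δ : ℝ≥0∞, 0 < δ ∧ ∃ U ∈ nhds x, ∀ᵐ y ∂dg, y ∈ U → δ ≤ d y := by
    intro x
    obtain ⟨m, hm⟩ := hWex x
    refine ⟨(Finset.range (m+1)).inf c, ?_, interior (K m), isOpen_interior.mem_nhds hm, ?_⟩
    · rw [Finset.lt_inf_iff (lt_top_iff_ne_top.2 (by norm_num))]
      exact fun i _ => hc0 i
    · refine MeasureTheory.ae_of_all _ fun y hy => ?_
      exact Finset.inf_le (Finset.mem_range.2 (Nat.lt_succ_of_le (hnd_le y m hy)))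
  -- the L² membership
  have hL2 : ∀ (g₁ g₂ : G'), ∀ f ∈ F, MemLp (fun h => f (g₂⁻¹ * h * g₁)) 2 μ := by
    intro g₁ g₂ f hf
    have hfr : f ∈ Set.range e := he ▸ Set.mem_insert_of_mem _ hf
    obtain ⟨i, hi⟩ := hfr
    have hτ : Continuous fun h : G' => g₂⁻¹ * h * g₁ := by fun_prop
    have hφc : Continuous fun h : G' => f (g₂⁻¹ * h * g₁) := (hFc f hf).comp hτ
    set φ : G' → ℂ := fun h => f (g₂⁻¹ * h * g₁) with hφdef
    obtain ⟨n₁, hn₁⟩ := K.exists_mem g₁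
    obtain ⟨n₂, hn₂⟩ := K.exists_mem g₂
    set N : ℕ := max i (max n₁ n₂) with hN
    have hg₁ : g₁ ∈ K N := K.subset (le_trans (le_max_left _ _) (le_max_right _ _)) hn₁
    have hg₂ : g₂ ∈ K N := K.subset (le_trans (le_max_right _ _) (le_max_right _ _)) hn₂
    have hiN : i ≤ N := le_max_left _ _
    rw [memLp_two_iff_integrable_sq_norm hφc.aestronglyMeasurable]
    refine ⟨(hφc.norm.pow 2).aestronglyMeasurable, ?_⟩
    rw [hasFiniteIntegral_def]
    have hnn : ∀ a : G', ‖‖φ a‖^2‖ₑ = ENNReal.ofReal (‖φ a‖^2) :=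
      fun a => Real.enorm_eq_ofReal (by positivity)
    simp only [hnn]
    set ψ : G' → ℝ≥0∞ := fun a => ENNReal.ofReal (‖φ a‖^2) with hψdef
    have hψm : Measurable ψ := ((hφc.norm.pow 2).measurable).ennreal_ofReal
    rw [hμdef, lintegral_withDensity_eq_lintegral_mul dg hd_meas hψm,
      ← setLIntegral_univ, ← hSunion, lintegral_iUnion hSm hSdisj]
    -- per-shell key estimate
    have hSsub : ∀ n, S n ⊆ K n := by
      intro n a ha
      have hna : nd a = n := ha
      exact interior_subset (hna ▸ hnd_spec a)
    have key : ∀ n, c n * ENNReal.ofReal (M (max n N)) * dg (K n)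
        ≤ (1 + ENNReal.ofReal (M N)) * 2⁻¹ ^ n := by
      intro n
      set P : ℝ≥0∞ := 1 + ENNReal.ofReal (M n) with hP
      set Q : ℝ≥0∞ := 1 + dg (K n) with hQ
      have hP0 : P ≠ 0 := (lt_of_lt_of_le one_pos le_self_add).ne'
      have hPt : P ≠ ⊤ := by simp [hP, ENNReal.ofReal_ne_top]
      have hQ0 : Q ≠ 0 := (lt_of_lt_of_le one_pos le_self_add).ne'
      have hQt : Q ≠ ⊤ := by simp [hQ, (hKfin n).ne]
      have h2n0 : ((2:ℝ≥0∞)^n) ≠ 0 := (ENNReal.pow_pos (by norm_num) n).ne'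
      have h2nt : ((2:ℝ≥0∞)^n) ≠ ⊤ := by simp
      have hsplit : c n = ((2:ℝ≥0∞)^n)⁻¹ * P⁻¹ * Q⁻¹ := by
        rw [show c n = ((2:ℝ≥0∞)^n * P * Q)⁻¹ from rfl]
        rw [ENNReal.mul_inv (Or.inl (mul_ne_zero h2n0 hP0)) (Or.inr hQ0),
          ENNReal.mul_inv (Or.inl h2n0) (Or.inr hP0)]
      have hDQ : dg (K n) * Q⁻¹ ≤ 1 := by
        calc dg (K n) * Q⁻¹ ≤ Q * Q⁻¹ := mul_le_mul_left le_add_self _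
        _ = 1 := ENNReal.mul_inv_cancel hQ0 hQt
      have hAP : ENNReal.ofReal (M (max n N)) * P⁻¹ ≤ 1 + ENNReal.ofReal (M N) := by
        rcases le_or_gt N n with hle | hlt
        · rw [max_eq_left hle]
          calc ENNReal.ofReal (M n) * P⁻¹ ≤ P * P⁻¹ := mul_le_mul_left le_add_self _
          _ = 1 := ENNReal.mul_inv_cancel hP0 hPt
          _ ≤ 1 + ENNReal.ofReal (M N) := le_self_add
        · rw [max_eq_right hlt.le]
          calc ENNReal.ofReal (M N) * P⁻¹ ≤ ENNReal.ofReal (M N) * 1 :=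
              mul_le_mul_right (ENNReal.inv_le_one.2 le_self_add) _
          _ = ENNReal.ofReal (M N) := mul_one _
          _ ≤ 1 + ENNReal.ofReal (M N) := le_add_self
      calc c n * ENNReal.ofReal (M (max n N)) * dg (K n)
          = (ENNReal.ofReal (M (max n N)) * P⁻¹) * (dg (K n) * Q⁻¹) * ((2:ℝ≥0∞)^n)⁻¹ := by
            rw [hsplit]; ring
      _ ≤ (1 + ENNReal.ofReal (M N)) * 1 * ((2:ℝ≥0∞)^n)⁻¹ :=
            mul_le_mul_left (mul_le_mul' hAP hDQ) _
      _ = (1 + ENNReal.ofReal (M N)) * 2⁻¹ ^ n := by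
            rw [mul_one, ← ENNReal.inv_pow]
    have hterm : ∀ n, ∫⁻ a in S n, (d * ψ) a ∂dg ≤ (1 + ENNReal.ofReal (M N)) * 2⁻¹ ^ n := by
      intro n
      have hb : ∀ a ∈ S n, (d * ψ) a ≤ c n * ENNReal.ofReal (M (max n N)) := by
        intro a ha
        have hnda : nd a = n := ha
        have haK : a ∈ K (max n N) := K.subset (le_max_left _ _) (hSsub n ha)
        have hbound : ‖φ a‖ ^ 2 ≤ M (max n N) := by
          have := hM (max n N) g₁ (K.subset (le_max_right _ _) hg₁) g₂
            (K.subset (le_max_right _ _) hg₂) a haK i (le_trans hiN (le_max_right _ _))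
          rwa [hi] at this
        calc (d * ψ) a = c n * ENNReal.ofReal (‖φ a‖^2) := by
              rw [show (d * ψ) a = c (nd a) * ENNReal.ofReal (‖φ a‖^2) from rfl, hnda]
        _ ≤ c n * ENNReal.ofReal (M (max n N)) :=
              mul_le_mul_right (ENNReal.ofReal_le_ofReal hbound) _
      calc ∫⁻ a in S n, (d * ψ) a ∂dg
          ≤ ∫⁻ _ in S n, c n * ENNReal.ofReal (M (max n N)) ∂dg := setLIntegral_mono' (hSm n) hb
      _ = c n * ENNReal.ofReal (M (max n N)) * dg (S n) := setLIntegral_const _ _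
      _ ≤ c n * ENNReal.ofReal (M (max n N)) * dg (K n) :=
            mul_le_mul_right (measure_mono (hSsub n)) _
      _ ≤ (1 + ENNReal.ofReal (M N)) * 2⁻¹ ^ n := key n
    calc ∑' n, ∫⁻ a in S n, (d * ψ) a ∂dg
        ≤ ∑' n : ℕ, (1 + ENNReal.ofReal (M N)) * 2⁻¹ ^ n := ENNReal.tsum_le_tsum hterm
    _ = (1 + ENNReal.ofReal (M N)) * ∑' n : ℕ, (2:ℝ≥0∞)⁻¹ ^ n := ENNReal.tsum_mul_left
    _ < ⊤ := by
        rw [ENNReal.tsum_geometric, ENNReal.one_sub_inv_two, inv_inv]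
        exact ENNReal.mul_lt_top (by simp [ENNReal.ofReal_ne_top, lt_top_iff_ne_top])
          (by norm_num)
  exact ⟨μ, ⟨dg, inferInstance, d, hd_meas, hμdef, htame2⟩, hL2⟩



end HolFourier
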